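/- arXiv:1901.08566 — 2 statements merged into one kernel-verified Lean document; each statement's English description precedes it below -/
import Mathlib

section
/- Let F be a nonempty compact convex subset of P(d,n) and let M ∈ P(d,n) with R_F(M) finite. Then for every ensemble E = {(q_i, ρ_i)}_{i=1}^n of n quantum states on ℂ^d, p_succ(E, M) ≤ (1 + R_F(M)) · sup_{N ∈ F} p_succ(E, N). -/
open scoped BigOperators ComplexOrder

/-- An `n`-outcome POVM on `ℂ^d`: a tuple of positive semidefinite matrices summing to `1`. -/
def IsPOVM {d n : ℕ} (M : Fin n → Matrix (Fin d) (Fin d) ℂ) : Prop :=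
  (∀ i, (M i).PosSemidef) ∧ ∑ i, M i = 1

/-- The set of admissible noise parameters `s ≥ 0` for which some POVM `N` makes
`(M + s N)/(1+s)` a member of `F`. -/
def robustnessSet {d n : ℕ} (F : Set (Fin n → Matrix (Fin d) (Fin d) ℂ))
    (M : Fin n → Matrix (Fin d) (Fin d) ℂ) : Set ℝ :=
  {s : ℝ | 0 ≤ s ∧ ∃ N, IsPOVM N ∧
    (fun i => (1 + s)⁻¹ • (M i + s • N i)) ∈ F}

/-- The robustness of `M` with respect to `F`. -/
noncomputable def robustness {d n : ℕ} (F : Set (Fin n → Matrix (Fin d) (Fin d) ℂ))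
    (M : Fin n → Matrix (Fin d) (Fin d) ℂ) : ℝ :=
  sInf (robustnessSet F M)

/-- An ensemble of `n` quantum states on `ℂ^d`. -/
def IsEnsemble {d n : ℕ} (q : Fin n → ℝ) (ρ : Fin n → Matrix (Fin d) (Fin d) ℂ) : Prop :=
  (∀ i, 0 ≤ q i) ∧ ∑ i, q i = 1 ∧ ∀ i, (ρ i).PosSemidef ∧ (ρ i).trace = 1

/-- Success probability of discriminating the ensemble `(q, ρ)` with the POVM `M`. -/
noncomputable def psucc {d n : ℕ} (q : Fin n → ℝ) (ρ : Fin n → Matrix (Fin d) (Fin d) ℂ)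
    (M : Fin n → Matrix (Fin d) (Fin d) ℂ) : ℝ :=
  ∑ i, q i * ((M i * ρ i).trace).re


lemma trace_re_nonneg' {d : ℕ} {A B : Matrix (Fin d) (Fin d) ℂ}
    (hA : A.PosSemidef) (hB : B.PosSemidef) : 0 ≤ ((A * B).trace).re := by
  open scoped MatrixOrder Matrix.Norms.L2Operator in
    obtain ⟨C, rfl⟩ := CStarAlgebra.nonneg_iff_eq_star_mul_self.mp hA.nonneg
  rw [Matrix.mul_assoc, Matrix.trace_mul_comm]
  have hP : (C * B * C.conjTranspose).PosSemidef := hB.mul_mul_conjTranspose_same C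
  have h : ∀ i, 0 ≤ ((C * B * C.conjTranspose) i i).re := by
    intro i
    have := hP.dotProduct_mulVec_nonneg (Pi.single i 1)
    rw [Complex.nonneg_iff] at this
    simpa [Matrix.mulVec_single, dotProduct, Pi.single_apply] using this.1
  rw [Matrix.trace, Complex.re_sum]
  exact Finset.sum_nonneg fun i _ => h i

lemma psucc_nonneg' {d n : ℕ} {q : Fin n → ℝ} {ρ N : Fin n → Matrix (Fin d) (Fin d) ℂ}
    (hN : IsPOVM N) (hE : IsEnsemble q ρ) : 0 ≤ psucc q ρ N :=
  Finset.sum_nonneg fun i _ =>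
    mul_nonneg (hE.1 i) (trace_re_nonneg' (hN.1 i) (hE.2.2 i).1)

lemma psucc_le_one' {d n : ℕ} {q : Fin n → ℝ} {ρ N : Fin n → Matrix (Fin d) (Fin d) ℂ}
    (hN : IsPOVM N) (hE : IsEnsemble q ρ) : psucc q ρ N ≤ 1 := by
  have key : ∀ i, ((N i * ρ i).trace).re ≤ 1 := by
    intro i
    have hsub : (1 - N i : Matrix (Fin d) (Fin d) ℂ).PosSemidef := by
      have heq : (1 - N i : Matrix (Fin d) (Fin d) ℂ) = ∑ j ∈ Finset.univ.erase i, N j := by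
        rw [← hN.2, Finset.sum_erase_eq_sub (Finset.mem_univ i)]
      rw [heq]
      exact Finset.sum_induction N Matrix.PosSemidef (fun _ _ hA hB => hA.add hB)
        Matrix.PosSemidef.zero (fun j _ => hN.1 j)
    have h0 : 0 ≤ (((1 - N i) * ρ i).trace).re := trace_re_nonneg' hsub (hE.2.2 i).1
    have heq : ((1 - N i) * ρ i).trace = (ρ i).trace - (N i * ρ i).trace := by
      rw [Matrix.sub_mul, Matrix.trace_sub, Matrix.one_mul]
    rw [heq, (hE.2.2 i).2] at h0
    simpa using h0
  calc psucc q ρ N ≤ ∑ i, q i * 1 :=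
        Finset.sum_le_sum fun i _ => mul_le_mul_of_nonneg_left (key i) (hE.1 i)
    _ = 1 := by simp [hE.2.1]

/-- For every ensemble, the advantage of `M` over the free measurements is bounded by
`1 + R_F(M)`. -/
theorem psucc_le_one_add_robustness {d n : ℕ}
    (F : Set (Fin n → Matrix (Fin d) (Fin d) ℂ))
    (hne : F.Nonempty) (hcomp : IsCompact F) (hconv : Convex ℝ F)
    (hsub : ∀ N ∈ F, IsPOVM N)
    (M : Fin n → Matrix (Fin d) (Fin d) ℂ) (hM : IsPOVM M)
    (hfin : (robustnessSet F M).Nonempty)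
    (q : Fin n → ℝ) (ρ : Fin n → Matrix (Fin d) (Fin d) ℂ) (hE : IsEnsemble q ρ) :
    psucc q ρ M ≤ (1 + robustness F M) * sSup {x : ℝ | ∃ N ∈ F, x = psucc q ρ N} := by
  set S := {x : ℝ | ∃ N ∈ F, x = psucc q ρ N} with hS
  have hbdd : BddAbove S := by
    refine ⟨1, fun x hx => ?_⟩
    obtain ⟨N, hNF, rfl⟩ := hx
    exact psucc_le_one' (hsub N hNF) hE
  obtain ⟨N0, hN0⟩ := hne
  have hc0 : 0 ≤ sSup S :=
    le_trans (psucc_nonneg' (hsub N0 hN0) hE) (le_csSup hbdd ⟨N0, hN0, rfl⟩)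
  have key : ∀ s ∈ robustnessSet F M, psucc q ρ M ≤ (1 + s) * sSup S := by
    rintro s ⟨hs, N, hN, hmem⟩
    have h1s : (0 : ℝ) < 1 + s := by linarith
    have hPeq : psucc q ρ (fun i => (1 + s)⁻¹ • (M i + s • N i))
        = (1 + s)⁻¹ * (psucc q ρ M + s * psucc q ρ N) := by
      have hterm : ∀ i, q i * ((((1 + s)⁻¹ • (M i + s • N i)) * ρ i).trace).re
          = (1 + s)⁻¹ * (q i * ((M i * ρ i).trace).re)
            + (1 + s)⁻¹ * (s * (q i * ((N i * ρ i).trace).re)) := by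
        intro i
        rw [smul_mul_assoc, Matrix.trace_smul, Complex.smul_re, Matrix.add_mul,
          Matrix.trace_add, Complex.add_re, smul_mul_assoc, Matrix.trace_smul,
          Complex.smul_re]
        simp only [smul_eq_mul]
        ring
      simp only [psucc, hterm, Finset.sum_add_distrib, ← Finset.mul_sum]
      ring
    have hPS : psucc q ρ (fun i => (1 + s)⁻¹ • (M i + s • N i)) ≤ sSup S :=
      le_csSup hbdd ⟨_, hmem, rfl⟩
    have hNn : 0 ≤ psucc q ρ N := psucc_nonneg' hN hE
    have : psucc q ρ M + s * psucc q ρ N ≤ (1 + s) * sSup S := by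
      have := mul_le_mul_of_nonneg_left hPS (le_of_lt h1s)
      rw [hPeq, ← mul_assoc, mul_inv_cancel₀ (ne_of_gt h1s), one_mul] at this
      exact this
    nlinarith
  have hr0 : 0 ≤ robustness F M := le_csInf hfin fun s hs => hs.1
  rcases eq_or_lt_of_le hc0 with hc | hc
  · obtain ⟨s0, hs0⟩ := hfin
    have h1 := key s0 hs0
    rw [← hc] at h1 ⊢
    simpa using h1
  · have h2 : psucc q ρ M / sSup S - 1 ≤ robustness F M := by
      refine le_csInf hfin fun s hs => ?_
      rw [sub_le_iff_le_add, div_le_iff₀ hc]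
      have := key s hs
      nlinarith
    have h3 : psucc q ρ M / sSup S ≤ 1 + robustness F M := by linarith
    calc psucc q ρ M = (psucc q ρ M / sSup S) * sSup S := by field_simp
      _ ≤ (1 + robustness F M) * sSup S := mul_le_mul_of_nonneg_right h3 hc.le
end

section
/- For every M ∈ P(d,n), the robustness with respect to the incoherent measurements satisfies R_IC(M) ≤ min{d, n} − 1. -/
open scoped BigOperators ComplexOrder

/-- The set of incoherent `n`-outcome POVMs on `ℂ^d`: all effects are diagonal
in the standard basis. -/
def IC (d n : ℕ) : Set (Fin n → Matrix (Fin d) (Fin d) ℂ) :=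
  {S | IsPOVM S ∧ ∀ a, ∀ i j, i ≠ j → S a i j = 0}

section helpers
open Matrix

lemma psd_add {d : ℕ} {A B : Matrix (Fin d) (Fin d) ℂ} (hA : A.PosSemidef) (hB : B.PosSemidef) :
    (A + B).PosSemidef :=
  Matrix.PosSemidef.of_dotProduct_mulVec_nonneg (hA.1.add hB.1) fun x => by
    rw [add_mulVec, dotProduct_add]
    exact add_nonneg (hA.dotProduct_mulVec_nonneg x) (hB.dotProduct_mulVec_nonneg x)

lemma psd_sum {d n : ℕ} (M : Fin n → Matrix (Fin d) (Fin d) ℂ) (s : Finset (Fin n))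
    (h : ∀ i, (M i).PosSemidef) : (∑ i ∈ s, M i).PosSemidef := by
  classical
  induction s using Finset.induction with
  | empty => simpa using Matrix.PosSemidef.zero
  | insert _ _ hni ih => rw [Finset.sum_insert hni]; exact psd_add (h _) ih

lemma psd_smul {d : ℕ} {A : Matrix (Fin d) (Fin d) ℂ} (hA : A.PosSemidef) {r : ℝ} (hr : 0 ≤ r) :
    (r • A).PosSemidef := by
  refine Matrix.PosSemidef.of_dotProduct_mulVec_nonneg ?_ fun x => ?_
  · unfold Matrix.IsHermitian
    rw [Matrix.conjTranspose_smul, hA.1.eq, star_trivial]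
  · rw [Matrix.smul_mulVec, dotProduct_smul]
    have := hA.dotProduct_mulVec_nonneg x
    rw [Complex.real_smul]
    exact mul_nonneg (Complex.zero_le_real.mpr hr) this

lemma aux_cs {d : ℕ} (c : Fin d → ℂ) :
    Complex.normSq (∑ i, c i) ≤ (d : ℝ) * ∑ i, Complex.normSq (c i) := by
  calc Complex.normSq (∑ i, c i) = ‖∑ i, c i‖ ^ 2 := (Complex.sq_norm _).symm
    _ ≤ (∑ i, ‖c i‖) ^ 2 := by
        have h1 : ‖∑ i, c i‖ ≤ ∑ i, ‖c i‖ := norm_sum_le _ _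
        exact pow_le_pow_left₀ (norm_nonneg _) h1 2
    _ ≤ (Finset.univ.card : ℝ) * ∑ i, ‖c i‖ ^ 2 := by
        exact_mod_cast sq_sum_le_card_mul_sum_sq (s := Finset.univ) (f := fun i => ‖c i‖)
    _ = (d : ℝ) * ∑ i, Complex.normSq (c i) := by
        rw [Finset.card_univ, Fintype.card_fin]
        congr 1
        exact Finset.sum_congr rfl fun i _ => Complex.sq_norm _

lemma key {d : ℕ} {A : Matrix (Fin d) (Fin d) ℂ} (hA : A.PosSemidef) :
    ((d : ℝ) • Matrix.diagonal (fun i => A i i) - A).PosSemidef := by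
  obtain ⟨B, rfl⟩ : ∃ B : Matrix (Fin d) (Fin d) ℂ, A = Bᴴ * B := by
    open scoped MatrixOrder in
    exact CStarAlgebra.nonneg_iff_eq_star_mul_self.mp hA.nonneg
  have hdiag : ∀ i, (Bᴴ * B) i i = ((∑ k, Complex.normSq (B k i) : ℝ) : ℂ) := by
    intro i
    simp only [Matrix.mul_apply, Matrix.conjTranspose_apply, Complex.ofReal_sum]
    exact Finset.sum_congr rfl fun k _ => by
      rw [Complex.normSq_eq_conj_mul_self]; rfl
  refine Matrix.PosSemidef.of_dotProduct_mulVec_nonneg ?_ ?_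
  · apply Matrix.IsHermitian.sub
    · unfold Matrix.IsHermitian
      rw [Matrix.conjTranspose_smul, star_trivial]
      congr 1
      apply Matrix.isHermitian_diagonal_of_self_adjoint
      funext i
      rw [Pi.star_apply, hdiag i, Complex.star_def]
      exact Complex.conj_ofReal _
    · exact (Matrix.posSemidef_conjTranspose_mul_self B).1
  · intro x
    set y := B *ᵥ x with hy
    have e1 : star x ⬝ᵥ ((Bᴴ * B) *ᵥ x) = ((∑ k, Complex.normSq (y k) : ℝ) : ℂ) := by
      rw [← Matrix.mulVec_mulVec, Matrix.dotProduct_mulVec, ← Matrix.star_mulVec, ← hy]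
      simp only [dotProduct, Complex.ofReal_sum, Pi.star_apply]
      exact Finset.sum_congr rfl fun k _ => by
        rw [Complex.normSq_eq_conj_mul_self]; rfl
    have e2 : star x ⬝ᵥ (((d : ℝ) • Matrix.diagonal (fun i => (Bᴴ * B) i i)) *ᵥ x)
        = (((d : ℝ) * ∑ i, (∑ k, Complex.normSq (B k i)) * Complex.normSq (x i) : ℝ) : ℂ) := by
      rw [Matrix.smul_mulVec, dotProduct_smul, Complex.real_smul, Complex.ofReal_mul]
      congr 1
      simp only [dotProduct, Matrix.mulVec_diagonal, Complex.ofReal_sum, Pi.star_apply]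
      refine Finset.sum_congr rfl fun i _ => ?_
      rw [hdiag i, Complex.ofReal_mul]
      rw [show star (x i) * (((∑ k, Complex.normSq (B k i) : ℝ) : ℂ) * x i)
          = ((∑ k, Complex.normSq (B k i) : ℝ) : ℂ) * (star (x i) * x i) by ring]
      congr 1
      rw [Complex.normSq_eq_conj_mul_self]; rfl
    rw [Matrix.sub_mulVec, dotProduct_sub, e1, e2, ← Complex.ofReal_sub]
    rw [Complex.zero_le_real]
    rw [sub_nonneg]
    have swap : (d : ℝ) * ∑ i, (∑ k, Complex.normSq (B k i)) * Complex.normSq (x i)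
        = ∑ k, (d : ℝ) * ∑ i, Complex.normSq (B k i * x i) := by
      rw [Finset.mul_sum]
      rw [show ∑ i, (d:ℝ) * ((∑ k, Complex.normSq (B k i)) * Complex.normSq (x i))
          = ∑ i, ∑ k, (d:ℝ) * Complex.normSq (B k i * x i) by
        refine Finset.sum_congr rfl fun i _ => ?_
        rw [Finset.sum_mul, Finset.mul_sum]
        exact Finset.sum_congr rfl fun k _ => by rw [Complex.normSq_mul]]
      rw [Finset.sum_comm]
      exact Finset.sum_congr rfl fun k _ => (Finset.mul_sum _ _ _).symm
    rw [swap]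
    refine Finset.sum_le_sum fun k _ => ?_
    have : y k = ∑ i, B k i * x i := rfl
    rw [this]
    exact aux_cs _

lemma mem_zero {d n : ℕ} (M : Fin n → Matrix (Fin d) (Fin d) ℂ) (hM : IsPOVM M)
    (h : ∀ a, ∀ i j : Fin d, i ≠ j → M a i j = 0) :
    (0 : ℝ) ∈ robustnessSet (IC d n) M := by
  refine ⟨le_refl 0, M, hM, ?_⟩
  have : (fun i => (1 + (0:ℝ))⁻¹ • (M i + (0:ℝ) • M i)) = M := by
    funext i; simp
  rw [this]
  exact ⟨hM, h⟩

lemma diag_entry_nonneg {d : ℕ} {A : Matrix (Fin d) (Fin d) ℂ} (hA : A.PosSemidef) (k : Fin d) :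
    0 ≤ A k k := by
  have h := hA.dotProduct_mulVec_nonneg (Pi.single k 1)
  simpa [dotProduct, Pi.single_apply, apply_ite] using h

end helpers

/-- The robustness with respect to incoherent measurements never exceeds `min{d,n} − 1`. -/
theorem robustness_IC_le {d n : ℕ} (hd : 0 < d) (hn : 0 < n)
    (M : Fin n → Matrix (Fin d) (Fin d) ℂ) (hM : IsPOVM M) :
    robustness (IC d n) M ≤ min (d : ℝ) (n : ℝ) - 1 := by
  have hbdd : BddBelow (robustnessSet (IC d n) M) := ⟨0, fun x hx => hx.1⟩
  have hmin1 : (1:ℝ) ≤ min (d:ℝ) (n:ℝ) := le_min (by exact_mod_cast hd) (by exact_mod_cast hn)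
  -- trivial cases
  by_cases hd1 : d = 1
  · subst hd1
    have hmem : (0:ℝ) ∈ robustnessSet (IC 1 n) M :=
      mem_zero M hM (fun a i j hij => absurd (Subsingleton.elim i j) hij)
    calc robustness (IC 1 n) M ≤ 0 := csInf_le hbdd hmem
      _ ≤ min ((1:ℕ):ℝ) (n:ℝ) - 1 := by linarith [hmin1]
  by_cases hn1 : n = 1
  · subst hn1
    have hM1 : M = fun _ => 1 := by
      funext a
      have := hM.2
      rw [Fin.sum_univ_one] at this
      have ha : a = 0 := Subsingleton.elim a 0
      rw [ha]; exact this
    have hmem : (0:ℝ) ∈ robustnessSet (IC d 1) M :=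
      mem_zero M hM (fun a i j hij => by rw [hM1]; exact Matrix.one_apply_ne hij)
    calc robustness (IC d 1) M ≤ 0 := csInf_le hbdd hmem
      _ ≤ min (d:ℝ) ((1:ℕ):ℝ) - 1 := by linarith [hmin1]
  -- now d, n ≥ 2
  have hd2 : 2 ≤ d := by omega
  have hn2 : 2 ≤ n := by omega
  rcases le_total n d with hnd | hdn
  · -- min = n : use N i = (n-1)⁻¹ • (1 - M i)
    set t : ℝ := (n:ℝ) - 1 with ht
    have ht0 : t ≠ 0 := by
      have : (2:ℝ) ≤ n := by exact_mod_cast hn2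
      rw [ht]; intro h; linarith [this]
    have ht0' : (0:ℝ) ≤ t⁻¹ := by
      have : (2:ℝ) ≤ n := by exact_mod_cast hn2
      apply inv_nonneg.mpr; rw [ht]; linarith
    set N : Fin n → Matrix (Fin d) (Fin d) ℂ := fun i => t⁻¹ • ((1 : Matrix (Fin d) (Fin d) ℂ) - M i) with hNdef
    have hsub : ∀ i, (1 : Matrix (Fin d) (Fin d) ℂ) - M i = ∑ j ∈ Finset.univ.erase i, M j := by
      intro i
      rw [Finset.sum_erase_eq_sub (Finset.mem_univ i), hM.2]
    have hNpsd : ∀ i, (N i).PosSemidef := by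
      intro i
      rw [hNdef]
      exact psd_smul (by rw [hsub i]; exact psd_sum M _ hM.1) ht0'
    have hNsum : ∑ i, N i = 1 := by
      rw [hNdef, ← Finset.smul_sum]
      have : ∑ i, ((1 : Matrix (Fin d) (Fin d) ℂ) - M i) = t • (1 : Matrix (Fin d) (Fin d) ℂ) := by
        rw [Finset.sum_sub_distrib, hM.2, Finset.sum_const, Finset.card_univ, Fintype.card_fin]
        rw [← Nat.cast_smul_eq_nsmul ℝ, ht, sub_smul, one_smul]
      rw [this, smul_smul, inv_mul_cancel₀ ht0, one_smul]
    have heff : (fun i => (1 + t)⁻¹ • (M i + t • N i))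
        = fun _ => ((n:ℝ))⁻¹ • (1 : Matrix (Fin d) (Fin d) ℂ) := by
      funext i
      rw [hNdef]
      have h1 : t • (t⁻¹ • ((1 : Matrix (Fin d) (Fin d) ℂ) - M i)) = 1 - M i := by
        rw [smul_smul, mul_inv_cancel₀ ht0, one_smul]
      rw [h1, show M i + ((1 : Matrix (Fin d) (Fin d) ℂ) - M i) = 1 by abel,
        show (1 + t) = (n:ℝ) by rw [ht]; ring]
    have hmem : t ∈ robustnessSet (IC d n) M := by
      refine ⟨by
        have : (2:ℝ) ≤ n := by exact_mod_cast hn2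
        rw [ht]; linarith, N, ⟨hNpsd, hNsum⟩, ?_⟩
      rw [heff]
      refine ⟨⟨fun _ => psd_smul Matrix.PosSemidef.one (by positivity), ?_⟩, ?_⟩
      · rw [Finset.sum_const, Finset.card_univ, Fintype.card_fin, ← Nat.cast_smul_eq_nsmul ℝ,
          smul_smul, mul_inv_cancel₀ (by positivity : (n:ℝ) ≠ 0), one_smul]
      · intro a i j hij
        show ((n:ℝ))⁻¹ • (1 : Matrix (Fin d) (Fin d) ℂ) i j = 0
        rw [Matrix.one_apply_ne hij, smul_zero]
    have : robustness (IC d n) M ≤ t := csInf_le hbdd hmem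
    calc robustness (IC d n) M ≤ t := this
      _ = min (d:ℝ) (n:ℝ) - 1 := by
        rw [ht, min_eq_right (by exact_mod_cast hnd)]
  · -- min = d : use dephasing
    set t : ℝ := (d:ℝ) - 1 with ht
    have ht0 : t ≠ 0 := by
      have : (2:ℝ) ≤ d := by exact_mod_cast hd2
      rw [ht]; intro h; linarith [this]
    have ht0' : (0:ℝ) ≤ t⁻¹ := by
      have : (2:ℝ) ≤ d := by exact_mod_cast hd2
      apply inv_nonneg.mpr; rw [ht]; linarith
    set Δ : Fin n → Matrix (Fin d) (Fin d) ℂ :=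
      fun i => Matrix.diagonal (fun k => M i k k) with hΔdef
    have hΔsum : ∑ i, Δ i = 1 := by
      rw [hΔdef]
      have : ∑ i, Matrix.diagonal (fun k => M i k k)
          = Matrix.diagonal (fun k => ∑ i, M i k k) := by
        funext a b
        by_cases hab : a = b
        · subst hab; simp [Matrix.sum_apply, Matrix.diagonal_apply_eq]
        · simp [Matrix.sum_apply, Matrix.diagonal_apply_ne _ hab]
      rw [this]
      have h2 : (fun k => ∑ i, M i k k) = fun _ => (1:ℂ) := by
        funext k
        have : ∑ i, M i k k = (∑ i, M i) k k := by
          rw [Matrix.sum_apply]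
        rw [this, hM.2, Matrix.one_apply_eq]
      rw [h2, Matrix.diagonal_one]
    set N : Fin n → Matrix (Fin d) (Fin d) ℂ :=
      fun i => t⁻¹ • ((d:ℝ) • Δ i - M i) with hNdef
    have hNpsd : ∀ i, (N i).PosSemidef := fun i => psd_smul (key (hM.1 i)) ht0'
    have hNsum : ∑ i, N i = 1 := by
      rw [hNdef, ← Finset.smul_sum, Finset.sum_sub_distrib, ← Finset.smul_sum, hΔsum, hM.2]
      rw [show ((d:ℝ)) • (1 : Matrix (Fin d) (Fin d) ℂ) - 1 = t • 1 by
        rw [ht, sub_smul, one_smul]]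
      rw [smul_smul, inv_mul_cancel₀ ht0, one_smul]
    have heff : (fun i => (1 + t)⁻¹ • (M i + t • N i)) = Δ := by
      funext i
      rw [hNdef]
      have h1 : t • (t⁻¹ • ((d:ℝ) • Δ i - M i)) = (d:ℝ) • Δ i - M i := by
        rw [smul_smul, mul_inv_cancel₀ ht0, one_smul]
      rw [h1, show M i + ((d:ℝ) • Δ i - M i) = (d:ℝ) • Δ i by abel,
        show (1 + t) = (d:ℝ) by rw [ht]; ring, smul_smul,
        inv_mul_cancel₀ (by positivity : (d:ℝ) ≠ 0), one_smul]
    have hmem : t ∈ robustnessSet (IC d n) M := by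
      refine ⟨by
        have : (2:ℝ) ≤ d := by exact_mod_cast hd2
        rw [ht]; linarith, N, ⟨hNpsd, hNsum⟩, ?_⟩
      rw [heff]
      refine ⟨⟨fun i => Matrix.PosSemidef.diagonal (fun k => diag_entry_nonneg (hM.1 i) k), hΔsum⟩, ?_⟩
      intro a i j hij
      exact Matrix.diagonal_apply_ne _ hij
    calc robustness (IC d n) M ≤ t := csInf_le hbdd hmem
      _ = min (d:ℝ) (n:ℝ) - 1 := by
        rw [ht, min_eq_left (by exact_mod_cast hdn)]
end
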